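/- arXiv:0902.1402 — 2 statements merged into one kernel-verified Lean document; each statement's English description precedes it below -/
import Mathlib

section
/- In the Peano-example family of Markov selections: for the selection P^ν parametrized by a probability measure ν on [0,∞] (the law of the departing time from 0), the Markov property at the point x = 0 forces θ_t ν = φ(t) ν (where θ_t is the shift by t on [t,∞] and φ(t) = ν([t,∞])) and φ(s+t) = φ(s)φ(t); hence ν must be an exponential law (possibly degenerate: δ_0 or δ_∞). -/
open MeasureTheory

/-- The distinguished solution of `Ẋ = -X + √X` starting at `0`. -/
noncomputable def peanoXstar (t : ℝ) : ℝ := (1 - Real.exp (-t / 2)) ^ 2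

/-- The solution starting at `0` which departs from `0` at time `a ∈ [0,∞]`
(`a = ∞` being the identically zero solution). -/
noncomputable def peanoXsel (a : ENNReal) (t : ℝ) : ℝ :=
  if a = ⊤ then 0 else peanoXstar (max (t - a.toReal) 0)

lemma peanoXstar_pos {r : ℝ} (hr : r ≠ 0) : 0 < peanoXstar r := by
  have h1 : Real.exp (-r / 2) ≠ 1 := by
    intro h
    have h2 : -r / 2 = 0 := (Real.exp_eq_one_iff _).mp h
    apply hr; linarith
  have h2 : 1 - Real.exp (-r / 2) ≠ 0 := sub_ne_zero.mpr (Ne.symm h1)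
  exact lt_of_le_of_ne (sq_nonneg _) (Ne.symm (pow_ne_zero 2 h2))

lemma peanoXstar_zero : peanoXstar 0 = 0 := by simp [peanoXstar]

/-- A probability measure giving no mass to the complement of a singleton is a Dirac mass. -/
lemma peano_eq_dirac (μ : Measure ENNReal) [IsProbabilityMeasure μ] (x : ENNReal)
    (h : μ {x}ᶜ = 0) : μ = Measure.dirac x := by
  ext s hs
  rw [Measure.dirac_apply' x hs]
  by_cases hx : x ∈ s
  · have h1 : μ {x} = 1 := by
      have h2 : μ {x} + μ {x}ᶜ = 1 := by
        rw [measure_add_measure_compl (measurableSet_singleton x)]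
        exact measure_univ
      simpa [h] using h2
    have h3 : μ (s ∩ {x}) + μ (s \ {x}) = μ s :=
      measure_inter_add_diff s (measurableSet_singleton x)
    have h4 : μ (s \ {x}) = 0 := measure_mono_null (fun a ha => ha.2) h
    have h5 : s ∩ {x} = {x} := Set.inter_eq_right.mpr (Set.singleton_subset_iff.mpr hx)
    rw [← h3, h4, h5, h1, Set.indicator_of_mem hx]
    simp
  · have h6 : μ s = 0 := measure_mono_null (by intro a ha hax; exact hx (Set.mem_singleton_iff.mp hax ▸ ha)) h
    rw [h6, Set.indicator_of_notMem hx]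

/-- In the Peano example, for the selection `P^ν` with departing-time law `ν`, the Markov
property at `x = 0` forces the shift relation `θ_t ν = φ(t) ν` and the multiplicativity
`φ(s+t) = φ(s)φ(t)` of the survival function `φ(t) = ν([t,∞])`; hence `ν` is an exponential
law (possibly the degenerate ones `δ₀` or `δ_∞`). -/
theorem stmt_11 (ν : Measure ENNReal) [IsProbabilityMeasure ν]
    -- Markov property at `0`: `E^{P^ν_0}[f(ξ_{t+s})] = E^{P^ν_0}[E^{P^ν_{ξ_t}}[f(ξ_s)]]`,
    -- written out using the deterministic dynamics away from `0`
    (hMarkov : ∀ f : ℝ → ℝ, Measurable f → (∀ y, |f y| ≤ 1) →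
      ∀ s t : ℝ, 0 ≤ s → 0 ≤ t →
        ∫ a, f (peanoXsel a (t + s)) ∂ν =
          (∫ a in Set.Iio (ENNReal.ofReal t), f (peanoXstar (t + s - a.toReal)) ∂ν) +
            (ν (Set.Ici (ENNReal.ofReal t))).toReal * ∫ b, f (peanoXsel b s) ∂ν) :
    (∀ t : NNReal,
      (ν.restrict (Set.Ici (t : ENNReal))).map (fun a => a - (t : ENNReal)) =
        ν (Set.Ici (t : ENNReal)) • ν) ∧
    (∀ s t : NNReal,
      ν (Set.Ici ((s : ENNReal) + (t : ENNReal))) =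
        ν (Set.Ici (s : ENNReal)) * ν (Set.Ici (t : ENNReal))) ∧
    (ν = Measure.dirac 0 ∨ ν = Measure.dirac ⊤ ∨
      ∃ a : ℝ, 0 < a ∧ ∀ t : NNReal,
        ν (Set.Ici (t : ENNReal)) = ENNReal.ofReal (Real.exp (-a * t))) := by
  classical
  set f : ℝ → ℝ := (Set.Ioi (0:ℝ)).indicator (fun _ => 1) with hf_def
  have hf : Measurable f := measurable_const.indicator measurableSet_Ioi
  have hb : ∀ y, |f y| ≤ 1 := by
    intro y
    rw [hf_def]
    simp only [Set.indicator_apply]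
    split_ifs <;> simp
  -- pointwise identification of `f ∘ peanoXsel · w` with an indicator
  have hpoint : ∀ w : ℝ, 0 < w → ∀ a : ENNReal,
      f (peanoXsel a w) = (Set.Iio (ENNReal.ofReal w)).indicator (fun _ => (1:ℝ)) a := by
    intro w hw a
    by_cases ha : a = ⊤
    · subst ha
      have h1 : peanoXsel ⊤ w = 0 := by simp [peanoXsel]
      rw [h1, hf_def, Set.indicator_of_notMem (by simp : (0:ℝ) ∉ Set.Ioi (0:ℝ)),
        Set.indicator_of_notMem (by simp : (⊤:ENNReal) ∉ Set.Iio (ENNReal.ofReal w))]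
    · have h1 : peanoXsel a w = peanoXstar (max (w - a.toReal) 0) := by simp [peanoXsel, ha]
      by_cases hm : a.toReal < w
      · have h2 : max (w - a.toReal) 0 = w - a.toReal := max_eq_left (by linarith)
        have h3 : 0 < peanoXsel a w := by
          rw [h1, h2]; exact peanoXstar_pos (by linarith)
        rw [hf_def, Set.indicator_of_mem (Set.mem_Ioi.mpr h3),
          Set.indicator_of_mem (Set.mem_Iio.mpr ((ENNReal.lt_ofReal_iff_toReal_lt ha).mpr hm))]
      · have h2 : max (w - a.toReal) 0 = 0 := max_eq_right (by linarith)
        have h3 : peanoXsel a w = 0 := by rw [h1, h2, peanoXstar_zero]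
        rw [h3, hf_def, Set.indicator_of_notMem (by simp : (0:ℝ) ∉ Set.Ioi (0:ℝ)),
          Set.indicator_of_notMem]
        exact not_lt.mpr (ENNReal.ofReal_le_of_le_toReal (not_lt.mp hm))
  -- the key consequence of the Markov property
  have key : ∀ t u : ℝ, 0 ≤ t → 0 < u →
      (ν (Set.Iio (ENNReal.ofReal (t+u)))).toReal =
        (ν (Set.Iio (ENNReal.ofReal t))).toReal +
          (ν (Set.Ici (ENNReal.ofReal t))).toReal * (ν (Set.Iio (ENNReal.ofReal u))).toReal := by
    intro t u ht hu
    have H := hMarkov f hf hb u t hu.le ht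
    have e1 : ∫ a, f (peanoXsel a (t+u)) ∂ν = (ν (Set.Iio (ENNReal.ofReal (t+u)))).toReal := by
      rw [show (fun a => f (peanoXsel a (t+u))) =
          (Set.Iio (ENNReal.ofReal (t+u))).indicator (fun _ => (1:ℝ)) from
        funext (hpoint (t+u) (by linarith)),
        integral_indicator measurableSet_Iio, setIntegral_const]
      simp
      rfl
    have e3 : ∫ b, f (peanoXsel b u) ∂ν = (ν (Set.Iio (ENNReal.ofReal u))).toReal := by
      rw [show (fun b => f (peanoXsel b u)) =
          (Set.Iio (ENNReal.ofReal u)).indicator (fun _ => (1:ℝ)) from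
        funext (hpoint u hu),
        integral_indicator measurableSet_Iio, setIntegral_const]
      simp
      rfl
    have e2 : ∫ a in Set.Iio (ENNReal.ofReal t), f (peanoXstar (t + u - a.toReal)) ∂ν =
        (ν (Set.Iio (ENNReal.ofReal t))).toReal := by
      rw [setIntegral_congr_fun measurableSet_Iio
        (show Set.EqOn (fun a : ENNReal => f (peanoXstar (t + u - a.toReal)))
            (fun _ => (1:ℝ)) (Set.Iio (ENNReal.ofReal t)) by
          intro a ha
          have h2 : a.toReal < t := ENNReal.toReal_lt_of_lt_ofReal ha
          have h3 : 0 < peanoXstar (t + u - a.toReal) := peanoXstar_pos (by linarith)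
          simp only [hf_def]
          exact Set.indicator_of_mem (Set.mem_Ioi.mpr h3) _),
        setIntegral_const]
      simp
      rfl
    rw [e1, e2, e3] at H
    exact H
  -- the survival function
  set p : ℝ → ℝ := fun x => (ν (Set.Ici (ENNReal.ofReal x))).toReal with hp_def
  have hIci0 : Set.Ici (0:ENNReal) = Set.univ := by
    ext x; simpa using zero_le x
  have hp0 : p 0 = 1 := by
    rw [hp_def]; simp [ENNReal.ofReal_zero, hIci0]
  have hIio_eq : ∀ x : ℝ, (ν (Set.Iio (ENNReal.ofReal x))).toReal = 1 - p x := by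
    intro x
    rw [← Set.compl_Ici, prob_compl_eq_one_sub measurableSet_Ici,
      ENNReal.toReal_sub_of_le prob_le_one (by simp)]
    simp [hp_def]
  have hpmul : ∀ x y : ℝ, 0 ≤ x → 0 ≤ y → p (x+y) = p x * p y := by
    intro x y hx hy
    rcases eq_or_lt_of_le hy with h|h
    · rw [← h, add_zero, hp0, mul_one]
    · have k := key x y hx h
      rw [hIio_eq, hIio_eq, hIio_eq] at k
      nlinarith [k]
  have hp_le_one : ∀ x : ℝ, p x ≤ 1 := by
    intro x
    have h := prob_le_one (μ := ν) (s := Set.Ici (ENNReal.ofReal x))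
    have := ENNReal.toReal_mono (by simp) h
    simpa [hp_def] using this
  have hp_anti : ∀ x y : ℝ, x ≤ y → p y ≤ p x := by
    intro x y h
    exact ENNReal.toReal_mono (measure_ne_top _ _)
      (measure_mono (Set.Ici_subset_Ici.mpr (ENNReal.ofReal_le_ofReal h)))
  have hp_pow : ∀ (n : ℕ) (x : ℝ), 0 ≤ x → p (n * x) = p x ^ n := by
    intro n
    induction n with
    | zero => intro x _; simp [hp0]
    | succ n ih =>
      intro x hx
      have h1 : ((n+1 : ℕ) : ℝ) * x = (n : ℝ) * x + x := by push_cast; ring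
      rw [h1, hpmul ((n:ℝ)*x) x (by positivity) hx, ih x hx, pow_succ]
  -- multiplicativity of the survival function (second conclusion)
  have hmul2 : ∀ s t : NNReal,
      ν (Set.Ici ((s : ENNReal) + (t : ENNReal))) =
        ν (Set.Ici (s : ENNReal)) * ν (Set.Ici (t : ENNReal)) := by
    intro s t
    have h1 : ((s:ENNReal) + (t:ENNReal)) = ENNReal.ofReal ((s:ℝ) + (t:ℝ)) := by
      rw [ENNReal.ofReal_add s.coe_nonneg t.coe_nonneg, ENNReal.ofReal_coe_nnreal,
        ENNReal.ofReal_coe_nnreal]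
    have h2 : (s:ENNReal) = ENNReal.ofReal (s:ℝ) := (ENNReal.ofReal_coe_nnreal).symm
    have h3 : (t:ENNReal) = ENNReal.ofReal (t:ℝ) := (ENNReal.ofReal_coe_nnreal).symm
    rw [h1, h2, h3]
    refine (ENNReal.toReal_eq_toReal_iff' (measure_ne_top _ _)
      (ENNReal.mul_ne_top (measure_ne_top _ _) (measure_ne_top _ _))).mp ?_
    rw [ENNReal.toReal_mul]
    exact hpmul (s:ℝ) (t:ℝ) s.coe_nonneg t.coe_nonneg
  -- the mass at ⊤ is 0 or 1
  have hInt : (⋂ n : ℕ, Set.Ici ((n:ℕ) : ENNReal)) = {⊤} := by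
    ext a
    simp only [Set.mem_iInter, Set.mem_Ici, Set.mem_singleton_iff]
    constructor
    · intro h
      by_contra ha
      obtain ⟨n, hn⟩ := ENNReal.exists_nat_gt ha
      exact absurd (h n) (not_le.mpr hn)
    · rintro rfl n; exact le_top
  have T1 : Filter.Tendsto (fun n : ℕ => ν (Set.Ici ((n:ℕ) : ENNReal))) Filter.atTop
      (nhds (ν {⊤})) := by
    have h := tendsto_measure_iInter_atTop (μ := ν)
      (s := fun n : ℕ => Set.Ici ((n:ℕ) : ENNReal))
      (fun n => measurableSet_Ici.nullMeasurableSet)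
      (fun i j hij => Set.Ici_subset_Ici.mpr (by exact_mod_cast Nat.cast_le.mpr hij))
      ⟨0, measure_ne_top _ _⟩
    rw [hInt] at h
    exact h
  have heq2 : ∀ n : ℕ, ν (Set.Ici ((2*n:ℕ) : ENNReal)) =
      ν (Set.Ici ((n:ℕ) : ENNReal)) * ν (Set.Ici ((n:ℕ) : ENNReal)) := by
    intro n
    have h := hmul2 (n : NNReal) (n : NNReal)
    have hc : ((n : NNReal) : ENNReal) = ((n:ℕ) : ENNReal) := ENNReal.coe_natCast n
    rw [hc] at h
    have h2 : ((2*n:ℕ) : ENNReal) = ((n:ℕ) : ENNReal) + ((n:ℕ) : ENNReal) := by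
      push_cast; ring
    rw [h2]
    exact h
  have hm : ν {⊤} = 0 ∨ ν {⊤} = 1 := by
    have T2 : Filter.Tendsto (fun n : ℕ => ν (Set.Ici ((2*n:ℕ) : ENNReal))) Filter.atTop
        (nhds (ν {⊤})) := by
      refine T1.comp (Filter.tendsto_atTop_mono (fun n => ?_) Filter.tendsto_id)
      exact Nat.le_mul_of_pos_left n (by norm_num)
    have T2' : Filter.Tendsto (fun n : ℕ => ν (Set.Ici ((2*n:ℕ) : ENNReal))) Filter.atTop
        (nhds (ν {⊤} * ν {⊤})) := by
      have := ENNReal.Tendsto.mul T1 (Or.inr (measure_ne_top _ _)) T1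
        (Or.inr (measure_ne_top _ _))
      simpa only [← heq2] using this
    have hmm : ν {⊤} = ν {⊤} * ν {⊤} := tendsto_nhds_unique T2 T2'
    rcases eq_or_ne (ν {⊤}) 0 with h|h
    · exact Or.inl h
    · refine Or.inr ?_
      have h2 : ν {⊤} * 1 = ν {⊤} * ν {⊤} := by rw [mul_one]; exact hmm
      exact ((ENNReal.mul_right_inj h (measure_ne_top ν {⊤})).mp h2).symm
  -- first conclusion: the shift relation
  have hshift : ∀ t : NNReal,
      (ν.restrict (Set.Ici (t : ENNReal))).map (fun a => a - (t : ENNReal)) =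
        ν (Set.Ici (t : ENNReal)) • ν := by
    intro t
    have hmeas : Measurable (fun a : ENNReal => a - (t : ENNReal)) :=
      measurable_id.sub measurable_const
    have hext : ∀ c : ENNReal,
        ν (Set.Ici ((t:ENNReal) + c)) = ν (Set.Ici (t:ENNReal)) * ν (Set.Ici c) := by
      intro c
      by_cases hc : c = ⊤
      · subst hc
        rw [add_top, Set.Ici_top]
        rcases hm with h|h
        · rw [h, mul_zero]
        · have h1 : ν (Set.Ici (t:ENNReal)) = 1 :=
            le_antisymm prob_le_one
              (h ▸ measure_mono (Set.singleton_subset_iff.mpr (Set.mem_Ici.mpr le_top)))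
          rw [h1, one_mul]
      · rw [← ENNReal.coe_toNNReal hc]
        exact hmul2 t c.toNNReal
    refine Measure.ext_of_Ici _ _ (fun c => ?_)
    rw [Measure.map_apply hmeas measurableSet_Ici,
      Measure.restrict_apply (hmeas measurableSet_Ici),
      Measure.smul_apply, smul_eq_mul]
    have hset : ((fun a : ENNReal => a - (t:ENNReal)) ⁻¹' Set.Ici c) ∩ Set.Ici (t:ENNReal) =
        Set.Ici ((t:ENNReal) + c) := by
      ext a
      simp only [Set.mem_inter_iff, Set.mem_preimage, Set.mem_Ici]
      constructor
      · rintro ⟨h1, h2⟩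
        have h3 := ((ENNReal.cancel_of_ne ENNReal.coe_ne_top).le_tsub_iff_right h2).mp h1
        rwa [add_comm]
      · intro h
        have h2 : (t:ENNReal) ≤ a := le_trans le_self_add h
        exact ⟨((ENNReal.cancel_of_ne ENNReal.coe_ne_top).le_tsub_iff_right h2).mpr
          (by rwa [add_comm] at h), h2⟩
    rw [hset, hext c]
  refine ⟨hshift, hmul2, ?_⟩
  -- classification
  by_cases h1 : p 1 = 0
  · -- ν = δ₀
    left
    have hpinv : ∀ n : ℕ, p (1/(n+1:ℝ)) = 0 := by
      intro n
      have h2 := hp_pow (n+1) (1/(n+1:ℝ)) (by positivity)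
      have harg : ((n+1:ℕ):ℝ) * (1/(n+1:ℝ)) = 1 := by
        push_cast; field_simp
      rw [harg, h1] at h2
      exact pow_eq_zero_iff (Nat.succ_ne_zero n) |>.mp h2.symm
    have hx0 : ∀ x : ℝ, 0 < x → ν (Set.Ici (ENNReal.ofReal x)) = 0 := by
      intro x hx
      obtain ⟨n, hn⟩ := exists_nat_one_div_lt hx
      have hle : p x ≤ p (1/(n+1:ℝ)) := hp_anti _ _ hn.le
      rw [hpinv n] at hle
      have hzero : p x = 0 := le_antisymm hle ENNReal.toReal_nonneg
      rcases (ENNReal.toReal_eq_zero_iff _).mp hzero with h|h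
      · exact h
      · exact absurd h (measure_ne_top _ _)
    apply peano_eq_dirac
    have hsub : ({(0:ENNReal)}ᶜ : Set ENNReal) ⊆
        ⋃ n : ℕ, Set.Ici (ENNReal.ofReal (1/(n+1:ℝ))) := by
      intro a ha
      simp only [Set.mem_compl_iff, Set.mem_singleton_iff] at ha
      by_cases htop : a = ⊤
      · subst htop
        exact Set.mem_iUnion.mpr ⟨0, Set.mem_Ici.mpr le_top⟩
      · have hpos : 0 < a.toReal := ENNReal.toReal_pos ha htop
        obtain ⟨n, hn⟩ := exists_nat_one_div_lt hpos
        refine Set.mem_iUnion.mpr ⟨n, ?_⟩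
        exact ENNReal.ofReal_le_of_le_toReal hn.le
    exact measure_mono_null hsub
      (measure_iUnion_null (fun n => hx0 _ (by positivity)))
  by_cases h2 : p 1 = 1
  · -- ν = δ_⊤
    right; left
    have hn1 : ∀ n : ℕ, p (n:ℝ) = 1 := by
      intro n
      have h := hp_pow n 1 zero_le_one
      rw [mul_one] at h
      rw [h, h2, one_pow]
    have hν1 : ∀ n : ℕ, ν (Set.Ici ((n:ℕ) : ENNReal)) = 1 := by
      intro n
      have hp := hn1 n
      have h3 : ν (Set.Ici (ENNReal.ofReal (n:ℝ))) = 1 := by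
        refine (ENNReal.toReal_eq_toReal_iff' (measure_ne_top _ _) (by simp)).mp ?_
        simpa [hp_def] using hp
      rwa [ENNReal.ofReal_natCast] at h3
    have htop1 : ν {⊤} = 1 := by
      have T1' : Filter.Tendsto (fun _ : ℕ => (1:ENNReal)) Filter.atTop (nhds (ν {⊤})) := by
        simpa only [hν1] using T1
      exact tendsto_nhds_unique T1' tendsto_const_nhds
    apply peano_eq_dirac
    rw [prob_compl_eq_one_sub (measurableSet_singleton ⊤), htop1]
    simp
  · -- exponential case
    right; right
    have hp1pos : 0 < p 1 := lt_of_le_of_ne ENNReal.toReal_nonneg (Ne.symm h1)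
    have hp1lt : p 1 < 1 := lt_of_le_of_ne (hp_le_one 1) h2
    have hp_pos : ∀ x : ℝ, 0 ≤ x → 0 < p x := by
      intro x hx
      obtain ⟨n, hn⟩ := exists_nat_ge x
      have h3 : p (n:ℝ) ≤ p x := hp_anti x (n:ℝ) hn
      have hpn : p (n:ℝ) = p 1 ^ n := by
        have h := hp_pow n 1 zero_le_one
        rwa [mul_one] at h
      calc (0:ℝ) < p 1 ^ n := pow_pos hp1pos n
        _ = p (n:ℝ) := hpn.symm
        _ ≤ p x := h3
    set g : ℝ → ℝ := fun x => Real.log (p x) with hg_def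
    have hg1neg : g 1 < 0 := Real.log_neg hp1pos hp1lt
    have hneg : 0 < -(g 1) := neg_pos.mpr hg1neg
    have hg0 : g 0 = 0 := by rw [hg_def]; simp [hp0]
    have hg_anti : ∀ x y : ℝ, 0 ≤ x → x ≤ y → g y ≤ g x := by
      intro x y hx hxy
      exact Real.log_le_log (hp_pos y (hx.trans hxy)) (hp_anti x y hxy)
    have hg_nsmul : ∀ (n : ℕ) (x : ℝ), 0 ≤ x → g ((n:ℝ) * x) = (n:ℝ) * g x := by
      intro n x hx
      rw [hg_def]
      simp only
      rw [hp_pow n x hx, Real.log_pow]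
    have hg_rat : ∀ q : ℚ, 0 ≤ q → g (q:ℝ) = (q:ℝ) * g 1 := by
      intro q hq
      have hden : (0:ℝ) < (q.den:ℝ) := by exact_mod_cast q.pos
      have hq0 : (0:ℝ) ≤ (q:ℝ) := by exact_mod_cast hq
      have hnum : ((q.num.toNat : ℕ) : ℝ) = (q:ℝ) * (q.den:ℝ) := by
        rw [show ((q.num.toNat : ℕ) : ℝ) = ((q.num : ℤ) : ℝ) by
          exact_mod_cast congrArg (fun z : ℤ => (z : ℝ)) (Int.toNat_of_nonneg (Rat.num_nonneg.mpr hq))]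
        rw [Rat.cast_def]
        field_simp
      have e1 : g ((q.den:ℝ) * (q:ℝ)) = (q.den:ℝ) * g (q:ℝ) := hg_nsmul q.den (q:ℝ) hq0
      have e2 : (q.den:ℝ) * (q:ℝ) = ((q.num.toNat : ℕ) : ℝ) := by rw [hnum]; ring
      have e3 : g (((q.num.toNat : ℕ) : ℝ)) = ((q.num.toNat : ℕ) : ℝ) * g 1 := by
        have h := hg_nsmul q.num.toNat 1 zero_le_one
        rwa [mul_one] at h
      have e4 : (q.den:ℝ) * g (q:ℝ) = (q:ℝ) * (q.den:ℝ) * g 1 := by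
        rw [← e1, e2, e3, hnum]
      have hden' : (q.den:ℝ) ≠ 0 := ne_of_gt hden
      field_simp at e4
      nlinarith [e4]
    have hg_lin : ∀ x : ℝ, 0 ≤ x → g x = x * g 1 := by
      intro x hx
      rcases eq_or_lt_of_le hx with h|hxpos
      · rw [← h, hg0, zero_mul]
      apply le_antisymm
      · refine le_of_forall_pos_le_add ?_
        intro ε hε
        set δ : ℝ := ε / (-(g 1)) with hδdef
        have hδ : 0 < δ := div_pos hε hneg
        have hδmul : δ * (-(g 1)) = ε := div_mul_cancel₀ ε (ne_of_gt hneg)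
        obtain ⟨q, hq1, hq2⟩ := exists_rat_btwn (show max 0 (x - δ) < x from
          max_lt hxpos (by linarith))
        have hq0 : (0:ℝ) ≤ (q:ℝ) := le_of_lt (lt_of_le_of_lt (le_max_left 0 _) hq1)
        have hgle : g x ≤ g (q:ℝ) := hg_anti (q:ℝ) x hq0 hq2.le
        rw [hg_rat q (by exact_mod_cast hq0)] at hgle
        have hxq : x - (q:ℝ) < δ := by
          have := lt_of_le_of_lt (le_max_right 0 (x-δ)) hq1
          linarith
        nlinarith [mul_lt_mul_of_pos_right hxq hneg]
      · refine le_of_forall_pos_le_add ?_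
        intro ε hε
        set δ : ℝ := ε / (-(g 1)) with hδdef
        have hδ : 0 < δ := div_pos hε hneg
        have hδmul : δ * (-(g 1)) = ε := div_mul_cancel₀ ε (ne_of_gt hneg)
        obtain ⟨q, hq1, hq2⟩ := exists_rat_btwn (show x < x + δ by linarith)
        have hq0 : (0:ℝ) ≤ (q:ℝ) := hx.trans hq1.le
        have hgle : g (q:ℝ) ≤ g x := hg_anti x (q:ℝ) hx hq1.le
        rw [hg_rat q (by exact_mod_cast hq0)] at hgle
        nlinarith [mul_lt_mul_of_pos_right hq2 hneg]
    refine ⟨-(g 1), hneg, ?_⟩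
    intro t
    have ht0 : (0:ℝ) ≤ (t:ℝ) := t.coe_nonneg
    have hpt : p (t:ℝ) = Real.exp (-(-(g 1)) * (t:ℝ)) := by
      calc p (t:ℝ) = Real.exp (g (t:ℝ)) := (Real.exp_log (hp_pos (t:ℝ) ht0)).symm
        _ = Real.exp ((t:ℝ) * g 1) := by rw [hg_lin (t:ℝ) ht0]
        _ = Real.exp (-(-(g 1)) * (t:ℝ)) := by ring_nf
    rw [show ((t:ENNReal)) = ENNReal.ofReal (t:ℝ) from (ENNReal.ofReal_coe_nnreal).symm,
      ← ENNReal.ofReal_toReal (measure_ne_top ν (Set.Ici (ENNReal.ofReal (t:ℝ))))]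
    exact congrArg ENNReal.ofReal hpt
end

section
/- Let W be a standard one-dimensional Brownian motion and α ∈ (0,1/2). Then for every x ∈ ℝ, the additive functional S_t^x = ∫₀^t σ_α(x + W_s)^{-2} ds is almost surely finite for all t ≥ 0, strictly increasing and continuous in t, with S_t^x → ∞ as t → ∞. -/
open MeasureTheory ProbabilityTheory Filter Set
open scoped ENNReal NNReal


namespace Stmt15Aux

noncomputable def gfun (α y : ℝ) : ℝ≥0∞ :=
  ENNReal.ofReal ((|y| ^ α / (1 + |y| ^ α))⁻¹ ^ 2)

lemma continuous_abs_rpow {c : ℝ} (hc : 0 ≤ c) : Continuous fun y : ℝ => |y| ^ c :=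
  (Real.continuous_rpow_const hc).comp continuous_abs

lemma measurable_gfun (α : ℝ) (hα : 0 ≤ α) : Measurable (gfun α) := by
  apply ENNReal.measurable_ofReal.comp
  apply Measurable.pow_const
  apply Measurable.inv
  exact ((continuous_abs_rpow hα).measurable).div
    ((continuous_const.add (continuous_abs_rpow hα)).measurable)

lemma one_le_gfun {α : ℝ} (hα : 0 < α) {y : ℝ} (hy : y ≠ 0) : 1 ≤ gfun α y := by
  have hu : 0 < |y| ^ α := Real.rpow_pos_of_pos (abs_pos.2 hy) α
  have h2 : 0 < |y| ^ α / (1 + |y| ^ α) := by positivity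
  have h1 : |y| ^ α / (1 + |y| ^ α) ≤ 1 := by
    rw [div_le_one (by linarith)]; linarith
  have h3 : (1:ℝ) ≤ (|y| ^ α / (1 + |y| ^ α))⁻¹ := (one_le_inv₀ h2).2 h1
  rw [gfun, ENNReal.one_le_ofReal]
  nlinarith

lemma gfun_le {α : ℝ} (hα : 0 < α) (y : ℝ) :
    gfun α y ≤ ENNReal.ofReal 2 + ENNReal.ofReal (2 * |y| ^ (-(2 * α))) := by
  rcases eq_or_ne y 0 with rfl | hy
  · simp [gfun, Real.zero_rpow hα.ne']
  · have hu : 0 < |y| ^ α := Real.rpow_pos_of_pos (abs_pos.2 hy) α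
    have hinv : (|y| ^ α / (1 + |y| ^ α))⁻¹ = |y| ^ (-α) + 1 := by
      rw [inv_div, Real.rpow_neg (abs_nonneg y)]
      field_simp
    have hsq : (|y| ^ (-α)) ^ (2:ℕ) = |y| ^ (-(2 * α)) := by
      rw [← Real.rpow_natCast (|y| ^ (-α)) 2, ← Real.rpow_mul (abs_nonneg y)]
      ring_nf
    have hv : 0 ≤ |y| ^ (-α) := Real.rpow_nonneg (abs_nonneg y) _
    calc gfun α y = ENNReal.ofReal ((|y| ^ (-α) + 1) ^ 2) := by rw [gfun, hinv]
    _ ≤ ENNReal.ofReal (2 + 2 * |y| ^ (-(2*α))) := ENNReal.ofReal_le_ofReal (by nlinarith [hsq, sq_nonneg (|y| ^ (-α) - 1)])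
    _ = _ := by
        rw [ENNReal.ofReal_add (by norm_num) (by positivity)]


noncomputable def Ca (α : ℝ) : ℝ≥0∞ :=
  ∫⁻ z in Icc (-1:ℝ) 1, ENNReal.ofReal (2 * |z| ^ (-(2*α)))

lemma integrableOn_abs_rpow {α : ℝ} (hα : 0 < α) (hα2 : α < 1/2) :
    IntegrableOn (fun z : ℝ => 2 * |z| ^ (-(2*α))) (Icc (-1:ℝ) 1) volume := by
  have hp : (-1:ℝ) < -(2*α) := by linarith
  have h1 : IntervalIntegrable (fun z : ℝ => z ^ (-(2*α))) volume 0 1 :=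
    intervalIntegral.intervalIntegrable_rpow' hp
  have h2 : IntervalIntegrable (fun z : ℝ => |z| ^ (-(2*α))) volume 0 1 := by
    rw [intervalIntegrable_iff_integrableOn_Ioc_of_le zero_le_one] at h1 ⊢
    apply h1.congr_fun _ measurableSet_Ioc
    intro z hz
    show z ^ (-(2*α)) = |z| ^ (-(2*α))
    rw [abs_of_pos hz.1]
  have h3 : IntervalIntegrable (fun z : ℝ => |z| ^ (-(2*α))) volume (-1) 0 := by
    have h4 := (IntervalIntegrable.iff_comp_neg (f := fun z : ℝ => |z| ^ (-(2*α))) (a := 0) (b := 1)).mp h2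
    simp only [abs_neg, neg_zero, neg_neg] at h4
    exact h4.symm
  have h5 : IntervalIntegrable (fun z : ℝ => |z| ^ (-(2*α))) volume (-1) 1 :=
    h3.trans h2
  rw [intervalIntegrable_iff_integrableOn_Ioc_of_le (by norm_num : (-1:ℝ) ≤ 1)] at h5
  exact (h5.congr_set_ae Ioc_ae_eq_Icc.symm).const_mul 2

lemma Ca_lt_top {α : ℝ} (hα : 0 < α) (hα2 : α < 1/2) : Ca α < ⊤ :=
  (integrableOn_abs_rpow hα hα2).lintegral_lt_top

lemma gaussianPDF_le {v : ℝ≥0} (hv : v ≠ 0) (y : ℝ) :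
    gaussianPDF 0 v y ≤ ENNReal.ofReal ((Real.sqrt v)⁻¹) := by
  rw [gaussianPDF]
  apply ENNReal.ofReal_le_ofReal
  unfold gaussianPDFReal
  have hsv : 0 < Real.sqrt v := Real.sqrt_pos.2 (by positivity)
  have h1 : Real.sqrt v ≤ Real.sqrt (2 * Real.pi * v) := by
    apply Real.sqrt_le_sqrt
    nlinarith [Real.pi_gt_three, v.coe_nonneg]
  have h2 : (Real.sqrt (2 * Real.pi * v))⁻¹ ≤ (Real.sqrt v)⁻¹ :=
    inv_anti₀ hsv h1
  have h3 : Real.exp (-(y - 0)^2 / (2 * (v:ℝ))) ≤ 1 := by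
    rw [Real.exp_le_one_iff]
    exact div_nonpos_of_nonpos_of_nonneg (neg_nonpos.2 (sq_nonneg _)) (by positivity)
  calc (Real.sqrt (2 * Real.pi * v))⁻¹ * Real.exp (-(y - 0)^2 / (2 * (v:ℝ)))
      ≤ (Real.sqrt (2 * Real.pi * v))⁻¹ * 1 := by
        apply mul_le_mul_of_nonneg_left h3 (inv_nonneg.2 (Real.sqrt_nonneg _))
    _ = (Real.sqrt (2 * Real.pi * v))⁻¹ := mul_one _
    _ ≤ (Real.sqrt v)⁻¹ := h2

lemma gauss_bound {α : ℝ} (hα : 0 < α) (hα2 : α < 1/2) (x : ℝ) {v : ℝ≥0} (hv : v ≠ 0) :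
    ∫⁻ y, gfun α (x + y) ∂(gaussianReal 0 v)
      ≤ 4 + ENNReal.ofReal ((Real.sqrt v)⁻¹) * Ca α := by
  set c : ℝ≥0∞ := ENNReal.ofReal ((Real.sqrt v)⁻¹) with hc
  set ind : ℝ → ℝ≥0∞ := (Icc (-1:ℝ) 1).indicator (fun z => ENNReal.ofReal (2 * |z| ^ (-(2*α))))
    with hindd
  have hg : Measurable fun y : ℝ => gfun α (x + y) :=
    (measurable_gfun α hα.le).comp (measurable_const.add measurable_id)
  have hpdf : Measurable (gaussianPDF 0 v) := measurable_gaussianPDF 0 v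
  have hind : Measurable ind := by
    apply Measurable.indicator _ measurableSet_Icc
    have : Continuous fun z : ℝ => |z| ^ (2*α) := continuous_abs_rpow (by positivity)
    have hm : Measurable fun z : ℝ => 2 * (|z| ^ (2*α))⁻¹ :=
      (this.measurable.inv).const_mul 2
    have heq : (fun z : ℝ => 2 * |z| ^ (-(2*α))) = fun z : ℝ => 2 * (|z| ^ (2*α))⁻¹ := by
      funext z; rw [Real.rpow_neg (abs_nonneg z)]
    exact ENNReal.measurable_ofReal.comp (heq ▸ hm)
  have hpt : ∀ y : ℝ, gaussianPDF 0 v y * gfun α (x + y)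
      ≤ 4 * gaussianPDF 0 v y + c * ind (x + y) := by
    intro y
    have h1 : gaussianPDF 0 v y * gfun α (x + y)
        ≤ gaussianPDF 0 v y * (2 + ENNReal.ofReal (2 * |x + y| ^ (-(2*α)))) := by
      refine mul_le_mul_right ?_ _
      have := gfun_le hα (x + y)
      rwa [show ENNReal.ofReal (2:ℝ) = (2:ℝ≥0∞) by simp] at this
    rcases le_or_gt |x + y| 1 with h | h
    · have hmem : x + y ∈ Icc (-1:ℝ) 1 := by
        rcases abs_le.1 h with ⟨h1', h2'⟩; exact ⟨h1', h2'⟩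
      have hindeq : ind (x + y) = ENNReal.ofReal (2 * |x + y| ^ (-(2*α))) :=
        indicator_of_mem hmem _
      calc gaussianPDF 0 v y * gfun α (x + y)
          ≤ gaussianPDF 0 v y * (2 + ENNReal.ofReal (2 * |x + y| ^ (-(2*α)))) := h1
        _ = gaussianPDF 0 v y * 2 + gaussianPDF 0 v y * ENNReal.ofReal (2 * |x + y| ^ (-(2*α)))
            := by rw [mul_add]
        _ ≤ 4 * gaussianPDF 0 v y + c * ind (x + y) := by
            rw [hindeq]
            apply add_le_add
            · rw [mul_comm]
              exact mul_le_mul_left (by norm_num) _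
            · exact mul_le_mul_left (gaussianPDF_le hv y) _
    · have hr : |x + y| ^ (-(2*α)) ≤ 1 :=
        Real.rpow_le_one_of_one_le_of_nonpos h.le (by linarith)
      have h2 : ENNReal.ofReal (2 * |x + y| ^ (-(2*α))) ≤ 2 := by
        rw [show (2:ℝ≥0∞) = ENNReal.ofReal (2:ℝ) by simp]
        exact ENNReal.ofReal_le_ofReal (by linarith)
      calc gaussianPDF 0 v y * gfun α (x + y)
          ≤ gaussianPDF 0 v y * (2 + ENNReal.ofReal (2 * |x + y| ^ (-(2*α)))) := h1
        _ ≤ gaussianPDF 0 v y * (2 + 2) := mul_le_mul_right (add_le_add_right h2 _) _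
        _ = 4 * gaussianPDF 0 v y := by ring
        _ ≤ 4 * gaussianPDF 0 v y + c * ind (x + y) := le_self_add
  calc ∫⁻ y, gfun α (x + y) ∂(gaussianReal 0 v)
      = ∫⁻ y, (gaussianPDF 0 v * fun y => gfun α (x + y)) y ∂volume := by
        rw [gaussianReal_of_var_ne_zero _ hv,
          lintegral_withDensity_eq_lintegral_mul _ hpdf hg]
    _ ≤ ∫⁻ y, (4 * gaussianPDF 0 v y + c * ind (x + y)) ∂volume := lintegral_mono fun y => hpt y
    _ = 4 * ∫⁻ y, gaussianPDF 0 v y ∂volume + c * ∫⁻ y, ind (x + y) ∂volume := by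
        rw [lintegral_add_left (hpdf.const_mul 4), lintegral_const_mul 4 hpdf,
          lintegral_const_mul' c _ ENNReal.ofReal_ne_top]
    _ = 4 * 1 + c * Ca α := by
        rw [lintegral_gaussianPDF_eq_one 0 hv,
          (measurePreserving_add_left volume x).lintegral_comp hind,
          hindd, lintegral_indicator measurableSet_Icc, Ca]
    _ = 4 + c * Ca α := by rw [mul_one]

end Stmt15Aux

open Stmt15Aux in
/-- For a standard one-dimensional Brownian motion `W` and `α ∈ (0,1/2)`, the additive
functional `S_t^x = ∫₀^t σ_α(x + W_s)⁻² ds` is a.s. finite for all `t`, strictly increasing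
and continuous in `t`, and tends to `∞` as `t → ∞`. -/
theorem stmt_15 {Ω : Type*} [MeasurableSpace Ω] (P : Measure Ω) [IsProbabilityMeasure P]
    (B : ℝ → Ω → ℝ) (hmeas : ∀ t, Measurable (B t))
    (h0 : ∀ᵐ ω ∂P, B 0 ω = 0)
    (hpath : ∀ᵐ ω ∂P, Continuous fun t => B t ω)
    (hincr : ∀ s t : ℝ, 0 ≤ s → s ≤ t →
      P.map (fun ω => B t ω - B s ω) = gaussianReal 0 (Real.toNNReal (t - s)))
    (hindep : ∀ (n : ℕ) (ts : Fin (n + 1) → ℝ), Monotone ts → (∀ i, 0 ≤ ts i) →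
      iIndepFun
        (fun (i : Fin n) ω => B (ts i.succ) ω - B (ts i.castSucc) ω) P)
    (α : ℝ) (hα : α ∈ Set.Ioo (0:ℝ) (1/2)) (x : ℝ) :
    ∀ᵐ ω ∂P,
      (∀ t : ℝ, 0 ≤ t →
        (∫⁻ s in Set.Ioc (0:ℝ) t,
          ENNReal.ofReal ((|x + B s ω| ^ α / (1 + |x + B s ω| ^ α))⁻¹ ^ 2)) < ⊤) ∧
      StrictMonoOn (fun t : ℝ =>
        ∫⁻ s in Set.Ioc (0:ℝ) t,
          ENNReal.ofReal ((|x + B s ω| ^ α / (1 + |x + B s ω| ^ α))⁻¹ ^ 2))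
        (Set.Ici 0) ∧
      ContinuousOn (fun t : ℝ =>
        (∫⁻ s in Set.Ioc (0:ℝ) t,
          ENNReal.ofReal ((|x + B s ω| ^ α / (1 + |x + B s ω| ^ α))⁻¹ ^ 2)).toReal)
        (Set.Ici 0) ∧
      Tendsto (fun t : ℝ =>
        ∫⁻ s in Set.Ioc (0:ℝ) t,
          ENNReal.ofReal ((|x + B s ω| ^ α / (1 + |x + B s ω| ^ α))⁻¹ ^ 2))
        atTop (nhds ⊤) := by
  obtain ⟨hα1, hα2⟩ := hα
  classical
  have hmap : ∀ t : ℝ, 0 ≤ t → P.map (B t) = gaussianReal 0 (Real.toNNReal t) := by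
    intro t ht
    have h1 := hincr 0 t le_rfl ht
    rw [sub_zero] at h1
    rw [← h1]
    exact Measure.map_congr (h0.mono fun ω hω => by
      show B t ω = B t ω - B 0 ω
      rw [hω, sub_zero])
  -- Fubini-type key step
  have key : ∀ (h : ℝ → ℝ≥0∞), Measurable h → ∀ T : ℕ,
      ∃ G : Ω → ℝ≥0∞, Measurable G ∧
        (∀ᵐ ω ∂P, (∫⁻ s in Set.Ioc (0:ℝ) T, h (B s ω)) = G ω) ∧
        ∫⁻ ω, G ω ∂P
          ≤ ∫⁻ s in Set.Ioc (0:ℝ) T, ∫⁻ y, h y ∂(gaussianReal 0 (Real.toNNReal s)) := by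
    intro h hh T
    set μT : Measure ℝ := volume.restrict (Set.Ioc (0:ℝ) T) with hμT
    have hctsprod : ∀ᵐ p ∂(P.prod μT), Continuous fun t => B t p.1 := by
      rw [ae_iff]
      have hsub : {p : Ω × ℝ | ¬ Continuous fun t => B t p.1}
          ⊆ (toMeasurable P {ω | ¬ Continuous fun t => B t ω}) ×ˢ (Set.univ : Set ℝ) :=
        fun p hp => ⟨subset_toMeasurable _ _ hp, trivial⟩
      refine measure_mono_null hsub ?_
      rw [Measure.prod_prod, measure_toMeasurable, ae_iff.mp hpath, zero_mul]
    have hBae : AEMeasurable (fun p : Ω × ℝ => B p.2 p.1) (P.prod μT) := by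
      have hmeasn : ∀ k : ℕ,
          Measurable fun p : Ω × ℝ => B (((⌈p.2 * 2 ^ k⌉ : ℤ) : ℝ) / 2 ^ k) p.1 := by
        intro k
        have h1 : Measurable fun q : Ω × ℤ => B (((q.2 : ℤ) : ℝ) / 2 ^ k) q.1 :=
          measurable_from_prod_countable_left fun m => hmeas ((m : ℝ) / 2 ^ k)
        have h2 : Measurable fun p : Ω × ℝ => (p.1, ⌈p.2 * 2 ^ k⌉) :=
          measurable_fst.prodMk ((measurable_snd.mul_const _).ceil)
        exact h1.comp h2
      apply aemeasurable_of_tendsto_metrizable_ae'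
        (f := fun k (p : Ω × ℝ) => B (((⌈p.2 * 2 ^ k⌉ : ℤ) : ℝ) / 2 ^ k) p.1)
        (fun k => (hmeasn k).aemeasurable)
      filter_upwards [hctsprod] with p hp
      have hd : Tendsto (fun k : ℕ => ((⌈p.2 * 2 ^ k⌉ : ℤ) : ℝ) / 2 ^ k) atTop (nhds p.2) := by
        have hub : ∀ k : ℕ, ((⌈p.2 * 2 ^ k⌉ : ℤ) : ℝ) / 2 ^ k ≤ p.2 + ((2:ℝ) ^ k)⁻¹ := by
          intro k
          rw [div_le_iff₀ (by positivity)]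
          have h3 := Int.ceil_lt_add_one (p.2 * 2 ^ k)
          have h4 : (p.2 + ((2:ℝ) ^ k)⁻¹) * 2 ^ k = p.2 * 2 ^ k + 1 := by
            field_simp
          linarith
        have hlb : ∀ k : ℕ, p.2 ≤ ((⌈p.2 * 2 ^ k⌉ : ℤ) : ℝ) / 2 ^ k := by
          intro k
          rw [le_div_iff₀ (by positivity)]
          exact Int.le_ceil _
        have h2 : Tendsto (fun k : ℕ => p.2 + ((2:ℝ) ^ k)⁻¹) atTop (nhds (p.2 + 0)) :=
          tendsto_const_nhds.add
            (tendsto_inv_atTop_zero.comp (tendsto_pow_atTop_atTop_of_one_lt one_lt_two))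
        rw [add_zero] at h2
        exact tendsto_of_tendsto_of_tendsto_of_le_of_le tendsto_const_nhds h2 hlb hub
      exact (hp.tendsto p.2).comp hd
    have hFae : AEMeasurable (fun p : Ω × ℝ => h (B p.2 p.1)) (P.prod μT) :=
      hh.comp_aemeasurable hBae
    set Fmk := hFae.mk _ with hFmkdef
    have hmkmeas : Measurable Fmk := hFae.measurable_mk
    have heq : (fun p : Ω × ℝ => h (B p.2 p.1)) =ᵐ[P.prod μT] Fmk := hFae.ae_eq_mk
    refine ⟨fun ω => ∫⁻ s, Fmk (ω, s) ∂μT, hmkmeas.lintegral_prod_right', ?_, ?_⟩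
    · filter_upwards [Measure.ae_ae_of_ae_prod heq] with ω hω
      exact lintegral_congr_ae hω
    · have hswap : ∀ᵐ s ∂μT, ∀ᵐ ω ∂P, h (B s ω) = Fmk (ω, s) := by
        have h1 : ((fun p : Ω × ℝ => h (B p.2 p.1)) ∘ Prod.swap)
            =ᵐ[μT.prod P] (Fmk ∘ Prod.swap) :=
          (Measure.measurePreserving_swap (μ := μT) (ν := P)).quasiMeasurePreserving.ae_eq_comp heq
        exact Measure.ae_ae_of_ae_prod h1
      have hs0 : ∀ᵐ s ∂μT, s ∈ Set.Ioc (0:ℝ) T := ae_restrict_mem measurableSet_Ioc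
      calc ∫⁻ ω, (∫⁻ s, Fmk (ω, s) ∂μT) ∂P
          = ∫⁻ p, Fmk p ∂(P.prod μT) := (lintegral_prod Fmk hmkmeas.aemeasurable).symm
        _ = ∫⁻ s, ∫⁻ ω, Fmk (ω, s) ∂P ∂μT := lintegral_prod_symm Fmk hmkmeas.aemeasurable
        _ ≤ ∫⁻ s in Set.Ioc (0:ℝ) T, ∫⁻ y, h y ∂(gaussianReal 0 (Real.toNNReal s)) := by
            apply lintegral_mono_ae
            filter_upwards [hswap, hs0] with s hs hsmem
            have h1 : ∫⁻ ω, Fmk (ω, s) ∂P = ∫⁻ ω, h (B s ω) ∂P :=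
              lintegral_congr_ae (hs.mono fun ω hω => hω.symm)
            rw [h1, ← hmap s hsmem.1.le, ← lintegral_map hh (hmeas s)]
  -- a.s. finiteness on [0, T]
  have hCa : Ca α < ⊤ := Ca_lt_top hα1 hα2
  have hgmeas : Measurable fun y : ℝ => gfun α (x + y) :=
    (measurable_gfun α hα1.le).comp (measurable_const.add measurable_id)
  have E1 : ∀ T : ℕ, ∀ᵐ ω ∂P, (∫⁻ s in Set.Ioc (0:ℝ) T, gfun α (x + B s ω)) < ⊤ := by
    intro T
    obtain ⟨G, hGmeas, hGeq, hGle⟩ := key (fun y => gfun α (x + y)) hgmeas T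
    have hbound : ∫⁻ ω, G ω ∂P < ⊤ := by
      apply lt_of_le_of_lt hGle
      have hae : ∀ᵐ s ∂(volume.restrict (Set.Ioc (0:ℝ) (T:ℝ))),
          (∫⁻ y, gfun α (x + y) ∂(gaussianReal 0 (Real.toNNReal s)))
            ≤ 4 + ENNReal.ofReal ((Real.sqrt s)⁻¹) * Ca α := by
        filter_upwards [ae_restrict_mem measurableSet_Ioc] with s hs
        have hv : Real.toNNReal s ≠ 0 := by
          simp only [ne_eq, Real.toNNReal_eq_zero, not_le]
          exact hs.1
        have hb := gauss_bound hα1 hα2 x hv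
        rwa [Real.coe_toNNReal s hs.1.le] at hb
      refine lt_of_le_of_lt (lintegral_mono_ae hae) ?_
      have hint : IntegrableOn (fun s : ℝ => s ^ (-(1/2) : ℝ)) (Set.Ioc (0:ℝ) T) volume := by
        have h1 := intervalIntegral.intervalIntegrable_rpow'
          (a := 0) (b := T) (by norm_num : (-1:ℝ) < -(1/2))
        rwa [intervalIntegrable_iff_integrableOn_Ioc_of_le
          (by positivity : (0:ℝ) ≤ (T:ℝ))] at h1
      have h1 : ∫⁻ s in Set.Ioc (0:ℝ) T, ENNReal.ofReal ((Real.sqrt s)⁻¹) < ⊤ := by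
        refine lt_of_le_of_lt (le_of_eq ?_) hint.lintegral_lt_top
        apply setLIntegral_congr_fun measurableSet_Ioc
        intro s hs
        dsimp only
        rw [Real.sqrt_eq_rpow, ← Real.rpow_neg hs.1.le]
      calc ∫⁻ s in Set.Ioc (0:ℝ) T, (4 + ENNReal.ofReal ((Real.sqrt s)⁻¹) * Ca α)
          = (∫⁻ _ in Set.Ioc (0:ℝ) T, (4:ℝ≥0∞))
            + ∫⁻ s in Set.Ioc (0:ℝ) T, ENNReal.ofReal ((Real.sqrt s)⁻¹) * Ca α := by
            rw [lintegral_add_left measurable_const]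
        _ = 4 * volume (Set.Ioc (0:ℝ) T)
            + (∫⁻ s in Set.Ioc (0:ℝ) T, ENNReal.ofReal ((Real.sqrt s)⁻¹)) * Ca α := by
            rw [setLIntegral_const, lintegral_mul_const' _ _ hCa.ne, mul_comm (4:ℝ≥0∞)]
        _ < ⊤ := by
            apply ENNReal.add_lt_top.2
            constructor
            · exact ENNReal.mul_lt_top (by simp) (by rw [Real.volume_Ioc]; exact ENNReal.ofReal_lt_top)
            · exact ENNReal.mul_lt_top h1 hCa
    filter_upwards [hGeq, ae_lt_top hGmeas hbound.ne] with ω h1 h2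
    rw [h1]; exact h2
  -- a.s. the level set is null on [0, T]
  have E2 : ∀ T : ℕ, ∀ᵐ ω ∂P,
      (∫⁻ s in Set.Ioc (0:ℝ) T,
        ({-x} : Set ℝ).indicator (fun _ => (1:ℝ≥0∞)) (B s ω)) = 0 := by
    intro T
    obtain ⟨G, hGmeas, hGeq, hGle⟩ := key (({-x} : Set ℝ).indicator fun _ => (1:ℝ≥0∞))
      (measurable_const.indicator (measurableSet_singleton _)) T
    have hzero : ∫⁻ ω, G ω ∂P = 0 := by
      refine le_antisymm (le_trans hGle (le_of_eq ?_)) zero_le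
      have hae : ∀ᵐ s ∂(volume.restrict (Set.Ioc (0:ℝ) (T:ℝ))),
          (∫⁻ y, ({-x} : Set ℝ).indicator (fun _ => (1:ℝ≥0∞)) y
            ∂(gaussianReal 0 (Real.toNNReal s))) = 0 := by
        filter_upwards [ae_restrict_mem measurableSet_Ioc] with s hs
        have hv : Real.toNNReal s ≠ 0 := by
          simp only [ne_eq, Real.toNNReal_eq_zero, not_le]
          exact hs.1
        have hsing : (gaussianReal 0 (Real.toNNReal s)) {-x} = 0 := by
          rw [gaussianReal_of_var_ne_zero _ hv,
            withDensity_apply _ (measurableSet_singleton _)]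
          exact setLIntegral_measure_zero _ _ (by simp)
        rw [lintegral_indicator (measurableSet_singleton _), setLIntegral_one]
        exact hsing
      rw [lintegral_congr_ae hae, lintegral_zero]
    have hGae : ∀ᵐ ω ∂P, G ω = 0 := (lintegral_eq_zero_iff hGmeas).1 hzero
    filter_upwards [hGeq, hGae] with ω h1 h2
    rw [h1, h2]
  -- conclusion for good ω
  filter_upwards [hpath, ae_all_iff.2 E1, ae_all_iff.2 E2] with ω hcont hfin hzero
  have hgint : ∀ t : ℝ,
      (∫⁻ s in Set.Ioc (0:ℝ) t,
        ENNReal.ofReal ((|x + B s ω| ^ α / (1 + |x + B s ω| ^ α))⁻¹ ^ 2))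
      = ∫⁻ s in Set.Ioc (0:ℝ) t, gfun α (x + B s ω) := fun t => rfl
  have hρfin : ∀ t : ℝ,
      (∫⁻ s in Set.Ioc (0:ℝ) t, gfun α (x + B s ω)) < ⊤ := by
    intro t
    refine lt_of_le_of_lt ?_ (hfin ⌈t⌉₊)
    exact lintegral_mono_set (Set.Ioc_subset_Ioc_right (Nat.le_ceil t))
  have hmeasω : Measurable fun s => gfun α (x + B s ω) :=
    (measurable_gfun α hα1.le).comp ((continuous_const.add hcont).measurable)
  have hne : ∀ T : ℕ, ∀ᵐ s ∂(volume.restrict (Set.Ioc (0:ℝ) (T:ℝ))), x + B s ω ≠ 0 := by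
    intro T
    have hm : Measurable fun s => ({-x} : Set ℝ).indicator (fun _ => (1:ℝ≥0∞)) (B s ω) :=
      (measurable_const.indicator (measurableSet_singleton _)).comp hcont.measurable
    filter_upwards [(lintegral_eq_zero_iff hm).1 (hzero T)] with s hs
    intro hcontra
    have hmem : B s ω ∈ ({-x} : Set ℝ) := by
      simp only [Set.mem_singleton_iff]
      linarith
    rw [Set.indicator_of_mem hmem] at hs
    exact one_ne_zero hs
  have hlow : ∀ a b : ℝ, 0 ≤ a → a ≤ b →
      ENNReal.ofReal (b - a) ≤ ∫⁻ s in Set.Ioc a b, gfun α (x + B s ω) := by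
    intro a b ha hab
    have hsub : Set.Ioc a b ⊆ Set.Ioc (0:ℝ) ((⌈b⌉₊ : ℕ) : ℝ) :=
      Set.Ioc_subset_Ioc ha (Nat.le_ceil b)
    have hne' := ae_restrict_of_ae_restrict_of_subset hsub (hne ⌈b⌉₊)
    calc ENNReal.ofReal (b - a) = ∫⁻ _ in Set.Ioc a b, (1:ℝ≥0∞) ∂volume := by
          rw [setLIntegral_one, Real.volume_Ioc]
      _ ≤ _ := lintegral_mono_ae (hne'.mono fun s hs => one_le_gfun hα1 hs)
  refine ⟨?_, ?_, ?_, ?_⟩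
  · intro t _
    rw [hgint t]
    exact hρfin t
  · intro a ha b hb hab
    simp only [hgint]
    have hsplit : (∫⁻ s in Set.Ioc (0:ℝ) b, gfun α (x + B s ω))
        = (∫⁻ s in Set.Ioc (0:ℝ) a, gfun α (x + B s ω))
          + ∫⁻ s in Set.Ioc a b, gfun α (x + B s ω) := by
      rw [show Set.Ioc (0:ℝ) b = Set.Ioc 0 a ∪ Set.Ioc a b from
        (Set.Ioc_union_Ioc_eq_Ioc ha hab.le).symm,
        lintegral_union measurableSet_Ioc (Set.Ioc_disjoint_Ioc_of_le le_rfl)]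
    rw [hsplit]
    have h2 : (∫⁻ s in Set.Ioc a b, gfun α (x + B s ω)) ≠ 0 := by
      intro hcontra
      have h3 := hlow a b ha hab.le
      rw [hcontra] at h3
      simp only [le_zero_iff, ENNReal.ofReal_eq_zero] at h3
      linarith
    exact ENNReal.lt_add_right (hρfin a).ne h2
  · intro t₀ ht₀
    have ht₀' : (0:ℝ) ≤ t₀ := ht₀
    set n : ℝ := ((⌈t₀⌉₊ : ℕ) : ℝ) with hn
    have ht₀n : t₀ < n + 1 := lt_of_le_of_lt (Nat.le_ceil t₀) (by linarith)
    have hnn : (0:ℝ) ≤ n + 1 := by positivity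
    set f : ℝ → ℝ := fun s => ((|x + B s ω| ^ α / (1 + |x + B s ω| ^ α))⁻¹ ^ 2) with hf
    have hfnn : ∀ s, 0 ≤ f s := fun s => sq_nonneg _
    have hcabs : Continuous fun s : ℝ => |x + B s ω| ^ α :=
      (continuous_abs_rpow hα1.le).comp (continuous_const.add hcont)
    have hfmeas : Measurable f := by
      apply Measurable.pow_const
      apply Measurable.inv
      exact hcabs.measurable.div (continuous_const.add hcabs).measurable
    have hfin2 : (∫⁻ s in Set.Icc (0:ℝ) (n+1), gfun α (x + B s ω)) < ⊤ := by
      have heqset : ∫⁻ s in Set.Icc (0:ℝ) (n+1), gfun α (x + B s ω)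
          = ∫⁻ s in Set.Ioc (0:ℝ) (n+1), gfun α (x + B s ω) :=
        setLIntegral_congr Ioc_ae_eq_Icc.symm
      rw [heqset]
      exact hρfin (n+1)
    have hint : IntegrableOn f (Set.Icc 0 (n+1)) volume := by
      constructor
      · exact hfmeas.aestronglyMeasurable
      · rw [hasFiniteIntegral_iff_ofReal (ae_of_all _ hfnn)]
        exact hfin2
    have hcont1 : ContinuousOn (fun t => ∫ s in Set.Ioc (0:ℝ) t, f s) (Set.Icc 0 (n+1)) :=
      intervalIntegral.continuousOn_primitive hint
    have hcong : ∀ t : ℝ,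
        ((∫⁻ s in Set.Ioc (0:ℝ) t,
          ENNReal.ofReal ((|x + B s ω| ^ α / (1 + |x + B s ω| ^ α))⁻¹ ^ 2))).toReal
        = ∫ s in Set.Ioc (0:ℝ) t, f s := by
      intro t
      rw [hgint t,
        ← integral_toReal hmeasω.aemeasurable (ae_of_all _ fun s => ENNReal.ofReal_lt_top)]
      apply integral_congr_ae
      apply ae_of_all
      intro s
      exact ENNReal.toReal_ofReal (hfnn s)
    have hCWA : ContinuousWithinAt (fun t => ∫ s in Set.Ioc (0:ℝ) t, f s) (Set.Ici 0) t₀ := by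
      apply (hcont1 t₀ ⟨ht₀', ht₀n.le⟩).mono_of_mem_nhdsWithin
      have h3 : Set.Iio (n+1) ∈ nhdsWithin t₀ (Set.Ici 0) :=
        mem_nhdsWithin_of_mem_nhds (Iio_mem_nhds ht₀n)
      have h4 : Set.Ici (0:ℝ) ∈ nhdsWithin t₀ (Set.Ici 0) := self_mem_nhdsWithin
      filter_upwards [h3, h4] with t h5 h6
      exact ⟨h6, le_of_lt h5⟩
    exact hCWA.congr (fun t _ => hcong t) (hcong t₀)
  · apply tendsto_nhds_top_mono ENNReal.tendsto_ofReal_atTop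
    filter_upwards [eventually_ge_atTop (0:ℝ)] with t ht
    have h1 := hlow 0 t le_rfl ht
    rw [sub_zero] at h1
    rw [hgint t]
    exact h1
end
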